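/- (Lattice point pairs on equal spheres.) For every integer r ≥ 2 and every ε > 0 there exists a constant C = C(r, ε) such that for every integer N ≥ 1, the number of pairs (k, k') ∈ ℤ^r × ℤ^r with |k_i| ≤ N and |k'_i| ≤ N for all i, and with k_1² + … + k_r² = (k'_1)² + … + (k'_r)², is at most C · N^{2r − 2 + ε}. -/

import Mathlib

lemma large_prime (ε : ℝ) (hε : 0 < ε) (p a : ℕ) (ha : 1 ≤ a)
    (h : (2:ℝ) ^ (1/ε) ≤ p) : (a + 1 : ℝ) ≤ ((p:ℝ) ^ a) ^ ε := by
  have h2 : (2:ℝ) ≤ (p:ℝ) ^ ε := by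
    have h := Real.rpow_le_rpow (le_of_lt (Real.rpow_pos_of_pos (by norm_num) _)) h (le_of_lt hε)
    rwa [← Real.rpow_mul (by norm_num), one_div_mul_cancel (ne_of_gt hε), Real.rpow_one] at h
  have hrw : ((p:ℝ) ^ a) ^ ε = ((p:ℝ) ^ ε) ^ a := by
    rw [← Real.rpow_natCast (p:ℝ) a, ← Real.rpow_natCast ((p:ℝ)^ε) a,
      ← Real.rpow_mul (by positivity), ← Real.rpow_mul (by positivity), mul_comm]
  rw [hrw]
  calc (a + 1 : ℝ) ≤ (2:ℝ) ^ a := by exact_mod_cast Nat.lt_two_pow_self (n := a)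
    _ ≤ ((p:ℝ) ^ ε) ^ a := pow_le_pow_left₀ (by norm_num) h2 a

lemma small_prime (ε : ℝ) (hε : 0 < ε) (p a : ℕ) (hp : 2 ≤ p) (ha : 1 ≤ a) :
    (a + 1 : ℝ) ≤ max (2 / (ε * Real.log 2)) 1 * ((p:ℝ) ^ a) ^ ε := by
  have hlog2 : (0:ℝ) < Real.log 2 := Real.log_pos (by norm_num)
  have h1 : (a:ℝ) * (ε * Real.log 2) ≤ ((p:ℝ) ^ a) ^ ε := by
    have h2 : (2:ℝ) ^ (a:ℝ) ≤ (p:ℝ) ^ (a:ℝ) :=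
      Real.rpow_le_rpow (by norm_num) (by exact_mod_cast hp) (by positivity)
    have h3 : ((p:ℝ) ^ a) ^ ε = (p:ℝ) ^ ((a:ℝ) * ε) := by
      rw [← Real.rpow_natCast (p:ℝ) a, ← Real.rpow_mul (by positivity)]
    rw [h3]
    calc (a:ℝ) * (ε * Real.log 2) ≤ Real.exp ((a:ℝ) * ε * Real.log 2) := by
          nlinarith [Real.add_one_le_exp ((a:ℝ) * ε * Real.log 2)]
      _ = (2:ℝ) ^ ((a:ℝ) * ε) := by rw [Real.rpow_def_of_pos (by norm_num), mul_comm (Real.log 2)]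
      _ ≤ (p:ℝ) ^ ((a:ℝ) * ε) :=
          Real.rpow_le_rpow (by positivity) (by exact_mod_cast hp) (by positivity)
  have hK : 2 / (ε * Real.log 2) ≤ max (2 / (ε * Real.log 2)) 1 := le_max_left _ _
  have hpos : (0:ℝ) < ε * Real.log 2 := by positivity
  have hpow : (0:ℝ) < ((p:ℝ) ^ a) ^ ε := by
    have : (0:ℝ) < (p:ℝ) ^ a := by positivity
    positivity
  calc (a + 1 : ℝ) ≤ 2 * a := by push_cast; nlinarith [(by exact_mod_cast ha : (1:ℝ) ≤ a)]
    _ = (2 / (ε * Real.log 2)) * ((a:ℝ) * (ε * Real.log 2)) := by field_simp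
    _ ≤ max (2 / (ε * Real.log 2)) 1 * ((p:ℝ) ^ a) ^ ε := by
        apply mul_le_mul hK h1 (by positivity) (by positivity)

lemma tau_bound (ε : ℝ) (hε : 0 < ε) :
    ∃ C : ℝ, 1 ≤ C ∧ ∀ n : ℕ, n ≠ 0 → (n.divisors.card : ℝ) ≤ C * (n : ℝ) ^ ε := by
  set K : ℝ := max (2 / (ε * Real.log 2)) 1 with hKdef
  have hK1 : 1 ≤ K := le_max_right _ _
  set P : ℕ := ⌈(2:ℝ) ^ (1/ε)⌉₊ + 1 with hPdef
  refine ⟨K ^ P, one_le_pow₀ hK1, ?_⟩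
  intro n hn
  set c : ℕ → ℝ := fun p => if (p:ℝ) < (2:ℝ) ^ (1/ε) then K else 1 with hc
  have key : ∀ p ∈ n.primeFactors,
      ((n.factorization p + 1 : ℕ) : ℝ) ≤ c p * ((p:ℝ) ^ (n.factorization p)) ^ ε := by
    intro p hp
    have hpp : p.Prime := Nat.prime_of_mem_primeFactors hp
    have ha : 1 ≤ n.factorization p := (Nat.Prime.factorization_pos_of_dvd hpp hn
      (Nat.dvd_of_mem_primeFactors hp))
    by_cases hsmall : (p:ℝ) < (2:ℝ) ^ (1/ε)
    · simp only [hc, if_pos hsmall]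
      push_cast
      exact small_prime ε hε p _ hpp.two_le ha
    · simp only [hc, if_neg hsmall]
      push_cast
      rw [one_mul]
      exact large_prime ε hε p _ ha (le_of_not_gt hsmall)
  -- the product identity for n
  have hnprod : (n:ℝ) = ∏ p ∈ n.primeFactors, (p:ℝ) ^ (n.factorization p) := by
    conv_lhs => rw [← Nat.factorization_prod_pow_eq_self hn]
    rw [Finsupp.prod, Nat.support_factorization]
    push_cast
    rfl
  have hτ : (n.divisors.card : ℝ) = ∏ p ∈ n.primeFactors, ((n.factorization p + 1 : ℕ) : ℝ) := by
    rw [Nat.card_divisors hn]; push_cast; rfl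
  have step1 : (n.divisors.card : ℝ) ≤
      ∏ p ∈ n.primeFactors, (c p * ((p:ℝ) ^ (n.factorization p)) ^ ε) := by
    rw [hτ]
    exact Finset.prod_le_prod (fun p _ => by positivity) key
  rw [Finset.prod_mul_distrib] at step1
  have hrpow : ∏ p ∈ n.primeFactors, ((p:ℝ) ^ (n.factorization p)) ^ ε = (n:ℝ) ^ ε := by
    rw [Real.finset_prod_rpow _ _ (fun p _ => by positivity), ← hnprod]
  rw [hrpow] at step1
  refine step1.trans (mul_le_mul_of_nonneg_right ?_ (by positivity))
  -- ∏ c p ≤ K ^ P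
  have hcle : ∏ p ∈ n.primeFactors, c p ≤ K ^ ((n.primeFactors.filter (fun p : ℕ => (p:ℝ) < (2:ℝ) ^ (1/ε))).card) := by
    rw [← Finset.prod_filter_mul_prod_filter_not n.primeFactors (fun p : ℕ => (p:ℝ) < (2:ℝ) ^ (1/ε)) c]
    have h1 : ∏ p ∈ n.primeFactors.filter (fun p : ℕ => (p:ℝ) < (2:ℝ) ^ (1/ε)), c p
        = K ^ ((n.primeFactors.filter (fun p : ℕ => (p:ℝ) < (2:ℝ) ^ (1/ε))).card) := by
      rw [Finset.prod_congr rfl (fun p hp => ?_), Finset.prod_const]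
      simp only [hc, if_pos (Finset.mem_filter.mp hp).2]
    have h2 : ∏ p ∈ n.primeFactors.filter (fun p : ℕ => ¬ (p:ℝ) < (2:ℝ) ^ (1/ε)), c p = 1 := by
      rw [Finset.prod_congr rfl (fun p hp => ?_), Finset.prod_const_one]
      simp only [hc, if_neg (Finset.mem_filter.mp hp).2]
    rw [h1, h2, mul_one]
  refine hcle.trans (pow_le_pow_right₀ hK1 ?_)
  have hsub : n.primeFactors.filter (fun p : ℕ => (p:ℝ) < (2:ℝ) ^ (1/ε)) ⊆ Finset.range P := by
    intro p hp
    have h := (Finset.mem_filter.mp hp).2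
    have : (p:ℝ) < (P:ℝ) := by
      refine h.trans_le ?_
      rw [hPdef]; push_cast
      linarith [Nat.le_ceil ((2:ℝ) ^ (1/ε))]
    exact Finset.mem_range.mpr (by exact_mod_cast this)
  exact (Finset.card_le_card hsub).trans_eq (Finset.card_range P)


-- number of (a,b) in box with a² - b² = m (m ≠ 0) is at most 2 τ(|m|)
lemma fiber_ne (N : ℕ) (m : ℤ) (hm : m ≠ 0) :
    (((Finset.Icc (-(N:ℤ)) N) ×ˢ (Finset.Icc (-(N:ℤ)) N)).filter
      (fun q => q.1 ^ 2 - q.2 ^ 2 = m)).card ≤ 2 * m.natAbs.divisors.card := by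
  have h2 : 2 * m.natAbs.divisors.card = (m.natAbs.divisors ×ˢ (Finset.univ : Finset Bool)).card := by
    rw [Finset.card_product]; simp [mul_comm]
  rw [h2]
  apply Finset.card_le_card_of_injOn
    (fun q => ((q.1 - q.2).natAbs, decide (0 < q.1 - q.2)))
  · intro q hq
    rw [Finset.mem_coe, Finset.mem_filter] at hq
    rw [Finset.mem_coe]
    have heq : (q.1 - q.2) * (q.1 + q.2) = m := by linear_combination hq.2
    refine Finset.mem_product.mpr ⟨Nat.mem_divisors.mpr ⟨?_, Int.natAbs_ne_zero.mpr hm⟩,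
      Finset.mem_univ _⟩
    exact Int.natAbs_dvd_natAbs.mpr ⟨q.1 + q.2, heq.symm⟩
  · intro q hq q' hq' h
    simp only [Finset.coe_filter, Set.mem_setOf_eq] at hq hq'
    have heq : (q.1 - q.2) * (q.1 + q.2) = m := by linear_combination hq.2
    have heq' : (q'.1 - q'.2) * (q'.1 + q'.2) = m := by linear_combination hq'.2
    have hd0 : q.1 - q.2 ≠ 0 := by rintro h0; rw [h0, zero_mul] at heq; exact hm heq.symm
    simp only [Prod.mk.injEq, decide_eq_decide] at h
    obtain ⟨h1, h2⟩ := h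
    have hd : q.1 - q.2 = q'.1 - q'.2 := by omega
    have hsum : q.1 + q.2 = q'.1 + q'.2 := by
      apply mul_left_cancel₀ hd0
      rw [heq, hd, heq']
    have : q.1 = q'.1 := by omega
    have : q.2 = q'.2 := by omega
    exact Prod.ext ‹q.1 = q'.1› ‹q.2 = q'.2›

-- number of (a,b) in box with a² = b² is at most 2(2N+1)
lemma fiber_zero (N : ℕ) :
    (((Finset.Icc (-(N:ℤ)) N) ×ˢ (Finset.Icc (-(N:ℤ)) N)).filter
      (fun q => q.1 ^ 2 - q.2 ^ 2 = 0)).card ≤ 2 * (2 * N + 1) := by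
  have h2 : 2 * (2 * N + 1) = ((Finset.Icc (-(N:ℤ)) N) ×ˢ (Finset.univ : Finset Bool)).card := by
    rw [Finset.card_product]
    simp [Int.card_Icc]
    omega
  rw [h2]
  apply Finset.card_le_card_of_injOn (fun q => (q.1, decide (0 < q.2)))
  · intro q hq
    rw [Finset.mem_coe, Finset.mem_filter, Finset.mem_product] at hq
    rw [Finset.mem_coe]
    exact Finset.mem_product.mpr ⟨hq.1.1, Finset.mem_univ _⟩
  · intro q hq q' hq' h
    simp only [Finset.coe_filter, Set.mem_setOf_eq] at hq hq'
    simp only [Prod.mk.injEq, decide_eq_decide] at h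
    obtain ⟨h1, h2⟩ := h
    have e : (q.2 - q.1) * (q.2 + q.1) = 0 := by linear_combination -hq.2
    have e' : (q'.2 - q'.1) * (q'.2 + q'.1) = 0 := by linear_combination -hq'.2
    have d : q.2 = q.1 ∨ q.2 = -q.1 := by
      rcases mul_eq_zero.mp e with h | h
      · left; omega
      · right; omega
    have d' : q'.2 = q'.1 ∨ q'.2 = -q'.1 := by
      rcases mul_eq_zero.mp e' with h | h
      · left; omega
      · right; omega
    have : q.2 = q'.2 := by omega
    exact Prod.ext h1 this


lemma equal_sums_card (N s : ℕ) :
    ((Fintype.piFinset (fun _ : Fin (s+1) => Finset.Icc (-(N:ℤ)) N) ×ˢ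
      Fintype.piFinset (fun _ : Fin (s+1) => Finset.Icc (-(N:ℤ)) N)).filter
      (fun t => ∑ i, (t.1 i) ^ 2 = ∑ i, (t.2 i) ^ 2)).card
      ≤ 2 * (2 * N + 1) ^ (2 * s + 1) := by
  have hcard : ((Fintype.piFinset (fun _ : Fin (s+1) => Finset.Icc (-(N:ℤ)) N) ×ˢ
      Fintype.piFinset (fun _ : Fin s => Finset.Icc (-(N:ℤ)) N)) ×ˢ
      (Finset.univ : Finset Bool)).card = 2 * (2 * N + 1) ^ (2 * s + 1) := by
    have hI : (Finset.Icc (-(N:ℤ)) N).card = 2*N+1 := by rw [Int.card_Icc]; omega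
    rw [Finset.card_product, Finset.card_product, Fintype.card_piFinset, Fintype.card_piFinset]
    simp only [hI, Finset.prod_const, Finset.card_univ, Fintype.card_fin, Fintype.card_bool]
    ring
  rw [← hcard]
  apply Finset.card_le_card_of_injOn
    (fun t : ((Fin (s+1) → ℤ) × (Fin (s+1) → ℤ)) => ((t.1, Fin.tail t.2), decide (0 < t.2 0)))
  · intro t ht
    rw [Finset.mem_coe, Finset.mem_filter, Finset.mem_product] at ht
    rw [Finset.mem_coe]
    refine Finset.mem_product.mpr ⟨Finset.mem_product.mpr ⟨ht.1.1, ?_⟩, Finset.mem_univ _⟩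
    rw [Fintype.mem_piFinset]
    intro i
    exact Fintype.mem_piFinset.mp ht.1.2 i.succ
  · intro t ht t' ht' h
    simp only [Finset.coe_filter, Set.mem_setOf_eq] at ht ht'
    simp only [Prod.mk.injEq, decide_eq_decide] at h
    obtain ⟨⟨h1, h2⟩, h3⟩ := h
    have hsum : (t.2 0) ^ 2 = (t'.2 0) ^ 2 := by
      have e : ∑ i, (t.2 i) ^ 2 = (t.2 0) ^ 2 + ∑ i : Fin s, (Fin.tail t.2 i) ^ 2 := by
        rw [Fin.sum_univ_succ]; rfl
      have e' : ∑ i, (t'.2 i) ^ 2 = (t'.2 0) ^ 2 + ∑ i : Fin s, (Fin.tail t'.2 i) ^ 2 := by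
        rw [Fin.sum_univ_succ]; rfl
      have := ht.2.symm.trans (h1 ▸ ht'.2)
      rw [e, e', h2] at this
      linarith [this]
    have hd : (t.2 0 - t'.2 0) * (t.2 0 + t'.2 0) = 0 := by linear_combination hsum
    have h0 : t.2 0 = t'.2 0 := by
      rcases mul_eq_zero.mp hd with h | h
      · omega
      · omega
    have ht2 : t.2 = t'.2 := by
      rw [← Fin.cons_self_tail t.2, ← Fin.cons_self_tail t'.2, h0, h2]
    exact Prod.ext h1 ht2


/-- Lattice point pairs on equal spheres: the number of pairs `(k, k')` of lattice points
in the box `[-N, N]^r` with `|k|² = |k'|²` is at most `C(r, ε) N^{2r - 2 + ε}`. -/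
theorem lattice_pairs_equal_spheres (r : ℕ) (hr : 2 ≤ r) (ε : ℝ) (hε : 0 < ε) :
    ∃ C : ℝ, 0 < C ∧
      ∀ (N : ℕ), 1 ≤ N →
      (Set.ncard {p : (Fin r → ℤ) × (Fin r → ℤ) |
          (∀ i, |p.1 i| ≤ (N : ℤ) ∧ |p.2 i| ≤ (N : ℤ)) ∧
          (∑ i, (p.1 i) ^ 2 = ∑ i, (p.2 i) ^ 2)} : ℝ)
        ≤ C * (N : ℝ) ^ (2 * (r : ℝ) - 2 + ε) := by
  obtain ⟨s, rfl⟩ : ∃ s, r = s + 2 := ⟨r - 2, by omega⟩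
  obtain ⟨Cτ, hCτ1, hCτ⟩ := tau_bound (ε/2) (by linarith)
  have hCτ0 : (0:ℝ) < Cτ := lt_of_lt_of_le one_pos hCτ1
  set W : ℝ := 2 * Cτ * ((s+1 : ℕ):ℝ) ^ (ε/2) with hW
  have hW0 : 0 < W := by positivity
  refine ⟨3 ^ (2*s+2) * (W + 4), by positivity, ?_⟩
  intro N hN
  have hN0 : (0:ℝ) < (N:ℝ) := by exact_mod_cast hN
  set I : Finset ℤ := Finset.Icc (-(N:ℤ)) N with hI
  have hIcard : I.card = 2*N+1 := by rw [hI, Int.card_Icc]; omega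
  set B2 : Finset (Fin (s+2) → ℤ) := Fintype.piFinset (fun _ => I) with hB2
  set B1 : Finset (Fin (s+1) → ℤ) := Fintype.piFinset (fun _ => I) with hB1
  have hB1card : B1.card = (2*N+1)^(s+1) := by
    rw [hB1, Fintype.card_piFinset]; simp [hIcard]
  set T := (B2 ×ˢ B2).filter
      (fun p => ∑ i, (p.1 i)^2 = ∑ i, (p.2 i)^2) with hT
  -- Step 0 : the set is ↑T
  have hS : {p : (Fin (s+2) → ℤ) × (Fin (s+2) → ℤ) |
      (∀ i, |p.1 i| ≤ (N:ℤ) ∧ |p.2 i| ≤ (N:ℤ)) ∧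
      (∑ i, (p.1 i)^2 = ∑ i, (p.2 i)^2)} = ↑T := by
    ext p
    simp only [hT, hB2, hI, Set.mem_setOf_eq, Finset.coe_filter, Finset.mem_product,
      Fintype.mem_piFinset, Finset.mem_Icc, abs_le]
    constructor
    · rintro ⟨h1, h2⟩; exact ⟨⟨fun i => (h1 i).1, fun i => (h1 i).2⟩, h2⟩
    · rintro ⟨⟨h1, h2⟩, h3⟩; exact ⟨fun i => ⟨h1 i, h2 i⟩, h3⟩
  rw [hS, Set.ncard_coe_finset]
  -- fiberwise counting over the tails
  set φ : ((Fin (s+2) → ℤ) × (Fin (s+2) → ℤ)) → ((Fin (s+1) → ℤ) × (Fin (s+1) → ℤ)) :=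
    fun p => (Fin.tail p.1, Fin.tail p.2) with hφ
  have hmaps : ∀ p ∈ T, φ p ∈ B1 ×ˢ B1 := by
    intro p hp
    rw [hT, Finset.mem_filter, Finset.mem_product] at hp
    refine Finset.mem_product.mpr ⟨?_, ?_⟩
    · exact Fintype.mem_piFinset.mpr fun i => Fintype.mem_piFinset.mp hp.1.1 i.succ
    · exact Fintype.mem_piFinset.mpr fun i => Fintype.mem_piFinset.mp hp.1.2 i.succ
  have hfib := Finset.card_eq_sum_card_fiberwise hmaps
  set m : ((Fin (s+1) → ℤ) × (Fin (s+1) → ℤ)) → ℤ :=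
    fun t => ∑ i, (t.2 i)^2 - ∑ i, (t.1 i)^2 with hm
  -- each fiber injects into the 2-variable solution set
  have fiber_le : ∀ t ∈ B1 ×ˢ B1,
      (T.filter (fun p => φ p = t)).card ≤
        ((I ×ˢ I).filter (fun q => q.1^2 - q.2^2 = m t)).card := by
    intro t _
    apply Finset.card_le_card_of_injOn (fun p => (p.1 0, p.2 0))
    · intro p hp
      rw [Finset.mem_coe, Finset.mem_filter] at hp
      obtain ⟨hpT, hpφ⟩ := hp
      rw [hT, Finset.mem_filter, Finset.mem_product] at hpT
      have h1 : Fin.tail p.1 = t.1 := congrArg Prod.fst hpφ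
      have h2 : Fin.tail p.2 = t.2 := congrArg Prod.snd hpφ
      have e1 : ∑ i, (p.1 i)^2 = (p.1 0)^2 + ∑ i, (t.1 i)^2 := by
        rw [Fin.sum_univ_succ, ← h1]; rfl
      have e2 : ∑ i, (p.2 i)^2 = (p.2 0)^2 + ∑ i, (t.2 i)^2 := by
        rw [Fin.sum_univ_succ, ← h2]; rfl
      rw [Finset.mem_coe, Finset.mem_filter]
      refine ⟨Finset.mem_product.mpr ⟨Fintype.mem_piFinset.mp hpT.1.1 0,
        Fintype.mem_piFinset.mp hpT.1.2 0⟩, ?_⟩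
      have heq := hpT.2
      rw [e1, e2] at heq
      rw [hm]
      dsimp only
      linarith
    · intro p hp p' hp' h
      simp only [Finset.coe_filter, Set.mem_setOf_eq] at hp hp'
      simp only [Prod.mk.injEq] at h
      have t1 : Fin.tail p.1 = Fin.tail p'.1 := by
        rw [show Fin.tail p.1 = (φ p).1 from rfl, show Fin.tail p'.1 = (φ p').1 from rfl,
          hp.2, hp'.2]
      have t2 : Fin.tail p.2 = Fin.tail p'.2 := by
        rw [show Fin.tail p.2 = (φ p).2 from rfl, show Fin.tail p'.2 = (φ p').2 from rfl,
          hp.2, hp'.2]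
      have e1 : p.1 = p'.1 := by
        rw [← Fin.cons_self_tail p.1, ← Fin.cons_self_tail p'.1, h.1, t1]
      have e2 : p.2 = p'.2 := by
        rw [← Fin.cons_self_tail p.2, ← Fin.cons_self_tail p'.2, h.2, t2]
      exact Prod.ext e1 e2
  -- bound on |m t|
  have hmbound : ∀ t ∈ B1 ×ˢ B1, (m t).natAbs ≤ (s+1) * N^2 := by
    intro t ht
    rw [Finset.mem_product] at ht
    have key : ∀ u : Fin (s+1) → ℤ, u ∈ B1 → 0 ≤ ∑ i, (u i)^2 ∧ ∑ i, (u i)^2 ≤ ((s+1) * N^2 : ℕ) := by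
      intro u hu
      constructor
      · exact Finset.sum_nonneg fun i _ => sq_nonneg _
      · push_cast
        calc ∑ i, (u i)^2 ≤ ∑ _i : Fin (s+1), ((N:ℤ))^2 := by
              refine Finset.sum_le_sum fun i _ => ?_
              have := Fintype.mem_piFinset.mp hu i
              rw [hI, Finset.mem_Icc] at this
              exact sq_le_sq' this.1 this.2
          _ = ((s:ℤ)+1) * (N:ℤ)^2 := by
              rw [Finset.sum_const, Finset.card_univ, Fintype.card_fin]; push_cast; ring
    obtain ⟨ha1, ha2⟩ := key t.1 ht.1
    obtain ⟨hb1, hb2⟩ := key t.2 ht.2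
    have : ((m t).natAbs : ℤ) ≤ (((s+1) * N^2 : ℕ) : ℤ) := by
      rw [← Int.abs_eq_natAbs, hm]
      dsimp only
      rw [abs_le]
      constructor <;> linarith
    exact_mod_cast this
  -- split sum according to m t = 0
  classical
  set U := B1 ×ˢ B1 with hU
  have hUcard : U.card = (2*N+1)^(2*s+2) := by
    rw [hU, Finset.card_product, hB1card, ← pow_add]
    ring_nf
  set f : ((Fin (s+1) → ℤ) × (Fin (s+1) → ℤ)) → ℕ :=
    fun t => (T.filter (fun p => φ p = t)).card with hf
  have hsplit : T.card = (∑ t ∈ U.filter (fun t => m t = 0), f t)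
      + (∑ t ∈ U.filter (fun t => ¬ m t = 0), f t) := by
    rw [hfib, ← Finset.sum_filter_add_sum_filter_not U (fun t => m t = 0)]
  -- zero part
  have hzero : (∑ t ∈ U.filter (fun t => m t = 0), f t) ≤ 4 * (2*N+1)^(2*s+2) := by
    have hE : (U.filter (fun t => m t = 0)).card ≤ 2 * (2*N+1)^(2*s+1) := by
      refine le_trans (Finset.card_le_card ?_) (equal_sums_card N s)
      intro t ht
      rw [Finset.mem_filter] at ht ⊢
      refine ⟨ht.1, ?_⟩
      have := ht.2
      rw [hm] at this
      dsimp only at this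
      omega
    calc (∑ t ∈ U.filter (fun t => m t = 0), f t)
        ≤ ∑ _t ∈ U.filter (fun t => m t = 0), 2 * (2*N+1) := by
          refine Finset.sum_le_sum fun t ht => ?_
          have h0 : m t = 0 := (Finset.mem_filter.mp ht).2
          refine le_trans (fiber_le t (Finset.mem_filter.mp ht).1) ?_
          rw [h0]
          exact fiber_zero N
      _ = (U.filter (fun t => m t = 0)).card * (2 * (2*N+1)) := by
          rw [Finset.sum_const, smul_eq_mul]
      _ ≤ (2 * (2*N+1)^(2*s+1)) * (2 * (2*N+1)) := by
          exact Nat.mul_le_mul_right _ hE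
      _ = 4 * (2*N+1)^(2*s+2) := by ring
  -- nonzero part (bounded in ℝ)
  have hNε : ((N:ℝ)^2) ^ (ε/2) = (N:ℝ)^ε := by
    rw [← Real.rpow_natCast (N:ℝ) 2, ← Real.rpow_mul (le_of_lt hN0)]
    congr 1
    push_cast
    ring
  have hone : (1:ℝ) ≤ (N:ℝ)^ε :=
    Real.one_le_rpow (by exact_mod_cast hN) (le_of_lt hε)
  set A : ℝ := (2*(N:ℝ)+1)^(2*s+2) with hA
  have hA0 : (0:ℝ) ≤ A := by positivity
  have hnz : ((∑ t ∈ U.filter (fun t => ¬ m t = 0), f t : ℕ) : ℝ) ≤ A * (W * (N:ℝ)^ε) := by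
    push_cast
    calc (∑ t ∈ U.filter (fun t => ¬ m t = 0), (f t : ℝ))
        ≤ ∑ _t ∈ U.filter (fun t => ¬ m t = 0), W * (N:ℝ)^ε := by
          refine Finset.sum_le_sum fun t ht => ?_
          rw [Finset.mem_filter] at ht
          have hmne : m t ≠ 0 := ht.2
          have hstep1 : (f t : ℝ) ≤ 2 * ((m t).natAbs.divisors.card : ℝ) := by
            have := le_trans (fiber_le t ht.1) (fiber_ne N (m t) hmne)
            exact_mod_cast this
          have hstep2 : ((m t).natAbs.divisors.card : ℝ) ≤ Cτ * ((m t).natAbs : ℝ)^(ε/2) :=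
            hCτ _ (Int.natAbs_ne_zero.mpr hmne)
          have hstep3 : ((m t).natAbs : ℝ)^(ε/2) ≤ (((s+1) * N^2 : ℕ) : ℝ)^(ε/2) := by
            apply Real.rpow_le_rpow (Nat.cast_nonneg _) ?_ (by linarith)
            exact_mod_cast hmbound t ht.1
          have hstep4 : (((s+1) * N^2 : ℕ) : ℝ)^(ε/2) = ((s+1 : ℕ):ℝ)^(ε/2) * (N:ℝ)^ε := by
            push_cast
            rw [Real.mul_rpow (by positivity) (by positivity), hNε]
          have hrpow0 : (0:ℝ) ≤ ((m t).natAbs : ℝ)^(ε/2) := by positivity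
          calc (f t : ℝ) ≤ 2 * ((m t).natAbs.divisors.card : ℝ) := hstep1
            _ ≤ 2 * (Cτ * ((m t).natAbs : ℝ)^(ε/2)) := by linarith
            _ ≤ 2 * (Cτ * ((((s+1) * N^2 : ℕ) : ℝ))^(ε/2)) := by nlinarith
            _ = W * (N:ℝ)^ε := by rw [hstep4, hW]; ring
      _ = ((U.filter (fun t => ¬ m t = 0)).card : ℝ) * (W * (N:ℝ)^ε) := by
          rw [Finset.sum_const, nsmul_eq_mul]
      _ ≤ A * (W * (N:ℝ)^ε) := by
          refine mul_le_mul_of_nonneg_right ?_ (by positivity)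
          have hle : (U.filter (fun t => ¬ m t = 0)).card ≤ (2*N+1)^(2*s+2) := by
            rw [← hUcard]; exact Finset.card_filter_le _ _
          rw [hA]
          calc ((U.filter (fun t => ¬ m t = 0)).card : ℝ)
              ≤ (((2*N+1)^(2*s+2) : ℕ) : ℝ) := by exact_mod_cast hle
            _ = (2*(N:ℝ)+1)^(2*s+2) := by push_cast; ring
  have hz : ((∑ t ∈ U.filter (fun t => m t = 0), f t : ℕ) : ℝ) ≤ 4 * A := by
    calc ((∑ t ∈ U.filter (fun t => m t = 0), f t : ℕ) : ℝ)
        ≤ ((4 * (2*N+1)^(2*s+2) : ℕ) : ℝ) := by exact_mod_cast hzero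
      _ = 4 * A := by rw [hA]; push_cast; ring
  have main : (T.card : ℝ) ≤ A * (W * (N:ℝ)^ε) + 4 * A := by
    have hc : (T.card : ℝ) = ((∑ t ∈ U.filter (fun t => m t = 0), f t : ℕ) : ℝ)
        + ((∑ t ∈ U.filter (fun t => ¬ m t = 0), f t : ℕ) : ℝ) := by
      exact_mod_cast congrArg (fun n : ℕ => (n : ℝ)) hsplit
    rw [hc]
    linarith
  refine main.trans ?_
  set B : ℝ := (3:ℝ)^(2*s+2) * (N:ℝ)^(2*s+2) with hB
  have hB0 : (0:ℝ) ≤ B := by positivity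
  have hbox : A ≤ B := by
    rw [hA, hB, ← mul_pow]
    apply pow_le_pow_left₀ (by positivity)
    have h1N : (1:ℝ) ≤ (N:ℝ) := by exact_mod_cast hN
    linarith
  have h1 : A * (W * (N:ℝ)^ε) ≤ B * (W * (N:ℝ)^ε) :=
    mul_le_mul_of_nonneg_right hbox (by positivity)
  have h2 : 4 * A ≤ 4 * B * (N:ℝ)^ε := by
    have : 4 * A ≤ 4 * B := by linarith
    nlinarith
  have h3 : B * (W * (N:ℝ)^ε) + 4 * B * (N:ℝ)^ε
      = (3:ℝ)^(2*s+2) * (W + 4) * ((N:ℝ)^(2*s+2) * (N:ℝ)^ε) := by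
    rw [hB]; ring
  have h4 : (N:ℝ)^(2*s+2) * (N:ℝ)^ε = (N:ℝ)^(2 * ((s+2:ℕ):ℝ) - 2 + ε) := by
    rw [← Real.rpow_natCast (N:ℝ) (2*s+2), ← Real.rpow_add hN0]
    congr 1
    push_cast
    ring
  calc A * (W * (N:ℝ)^ε) + 4 * A ≤ B * (W * (N:ℝ)^ε) + 4 * B * (N:ℝ)^ε := by linarith
    _ = (3:ℝ)^(2*s+2) * (W + 4) * (N:ℝ)^(2 * ((s+2:ℕ):ℝ) - 2 + ε) := by rw [h3, h4]
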